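/- For all integers n ≥ 3, the sequence c satisfies the third-order recurrence c_n = 3·c_{n-1} + c_{n-2} - c_{n-3}. -/
import Mathlib


theorem stmt_10 (r a c d : ℕ → ℕ)
    (hr : ∀ n : ℕ, 2 ≤ n → r n = r (n - 1) + a n + c n + d n)
    (ha : ∀ n : ℕ, 2 ≤ n → a n = c (n - 1))
    (hc : ∀ n : ℕ, 2 ≤ n → c n = r (n - 1) + a (n - 1) + d n)
    (hd : ∀ n : ℕ, 2 ≤ n → d n = r (n - 2))
    (ha0 : a 0 = 0) (hc0 : c 0 = 0) (hd0 : d 0 = 0)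
    (ha1 : a 1 = 0) (hd1 : d 1 = 0)
    (hr0 : r 0 = 1) (hr1 : r 1 = 2) (hc1 : c 1 = 1) :
    ∀ n : ℕ, 3 ≤ n → (c n : ℤ) = 3 * c (n - 1) + c (n - 2) - c (n - 3) := by
  have L : ∀ m : ℕ, 1 ≤ m → c m = c (m - 1) + r (m - 1) := by
    intro m
    induction m using Nat.strong_induction_on with
    | _ m ih =>
      intro hm
      match m, hm with
      | 1, _ => simp [hc1, hc0, hr0]
      | 2, _ =>
        have h1 := hc 2 (by norm_num)
        have h2 := hd 2 (by norm_num)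
        simp only [show (2:ℕ) - 1 = 1 from rfl, show (2:ℕ) - 2 = 0 from rfl] at *
        omega
      | (m+3), _ =>
        have h1 := hc (m+3) (by omega)
        have h2 := hd (m+3) (by omega)
        have h3 := ha (m+2) (by omega)
        have h4 := ih (m+2) (by omega) (by omega)
        have h1' : c (m+3) = r (m+2) + a (m+2) + d (m+3) := h1
        have h2' : d (m+3) = r (m+1) := h2
        have h3' : a (m+2) = c (m+1) := h3
        have h4' : c (m+2) = c (m+1) + r (m+1) := h4
        show c (m+3) = c (m+2) + r (m+2)
        omega
  intro n hn
  obtain ⟨k, rfl⟩ : ∃ k, n = k + 3 := ⟨n - 3, by omega⟩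
  have h1 := hr (k+2) (by omega)
  have h2 := ha (k+2) (by omega)
  have h3 := hd (k+2) (by omega)
  have l1 := L (k+3) (by omega)
  have l2 := L (k+2) (by omega)
  have l3 := L (k+1) (by omega)
  simp only [show k+3-1 = k+2 from rfl, show k+3-2 = k+1 from rfl,
    show k+3-3 = k from rfl, show k+2-1 = k+1 from rfl,
    show k+2-2 = k from rfl, show k+1-1 = k from rfl] at *
  omega
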